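/- arXiv:2509.20325 — 2 statements merged into one kernel-verified Lean document; each statement's English description precedes it below -/
import Mathlib

section
/- Let F : ℝ → ℝ be a real-analytic function satisfying 2·F·F'' + (F')² − 1 − 3·F² = 0 with F(0) = 0 and F'(0) = 1, and suppose moreover that all even-order derivatives of F vanish at 0 (i.e., F is odd near 0). Then F(r) = sinh(r) for all r in a neighborhood of 0. -/
open Set Filter Topology

/-- The vector field `y ↦ √(1 + y²)` is 1-Lipschitz. -/
lemma sqrt_one_add_sq_lipschitz : LipschitzWith 1 (fun y : ℝ => Real.sqrt (1 + y ^ 2)) := by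
  refine LipschitzWith.of_dist_le_mul fun a b => ?_
  rw [Real.dist_eq, Real.dist_eq, NNReal.coe_one, one_mul]
  have hsa : Real.sqrt (1 + a ^ 2) ^ 2 = 1 + a ^ 2 := Real.sq_sqrt (by positivity)
  have hsb : Real.sqrt (1 + b ^ 2) ^ 2 = 1 + b ^ 2 := Real.sq_sqrt (by positivity)
  have sa0 : 0 ≤ Real.sqrt (1 + a ^ 2) := Real.sqrt_nonneg _
  have sb0 : 0 ≤ Real.sqrt (1 + b ^ 2) := Real.sqrt_nonneg _
  have key : (Real.sqrt (1 + a ^ 2) - Real.sqrt (1 + b ^ 2)) ^ 2 ≤ (a - b) ^ 2 := by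
    have hprod : 1 + a * b ≤ Real.sqrt (1 + a ^ 2) * Real.sqrt (1 + b ^ 2) := by
      nlinarith [sq_nonneg (a - b), sq_nonneg (Real.sqrt (1 + a ^ 2) * Real.sqrt (1 + b ^ 2) - 1 - a * b), mul_nonneg sa0 sb0]
    nlinarith
  calc |Real.sqrt (1 + a ^ 2) - Real.sqrt (1 + b ^ 2)|
      = Real.sqrt ((Real.sqrt (1 + a ^ 2) - Real.sqrt (1 + b ^ 2)) ^ 2) := (Real.sqrt_sq_eq_abs _).symm
    _ ≤ Real.sqrt ((a - b) ^ 2) := Real.sqrt_le_sqrt key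
    _ = |a - b| := Real.sqrt_sq_eq_abs _

/-- If `F` is real-analytic, satisfies `2FF'' + (F')² − 1 − 3F² = 0`, `F(0) = 0`, `F'(0) = 1`,
and all even-order derivatives of `F` vanish at `0`, then `F = sinh` near `0`. -/
theorem analytic_ode_solution_eq_sinh (F : ℝ → ℝ)
    (hF : ∀ r : ℝ, AnalyticAt ℝ F r)
    (hODE : ∀ r : ℝ,
      2 * F r * iteratedDeriv 2 F r + (deriv F r) ^ 2 - 1 - 3 * (F r) ^ 2 = 0)
    (h0 : F 0 = 0) (h1 : deriv F 0 = 1)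
    (heven : ∀ k : ℕ, iteratedDeriv (2 * k) F 0 = 0) :
    ∃ ε > 0, ∀ r : ℝ, |r| < ε → F r = Real.sinh r := by
  -- basic differentiability facts
  have hF' : ∀ r : ℝ, HasDerivAt F (deriv F r) r :=
    fun r => (hF r).differentiableAt.hasDerivAt
  have hAON : AnalyticOnNhd ℝ F univ := fun r _ => hF r
  have hFd : ∀ r : ℝ, AnalyticAt ℝ (deriv F) r := fun r => hAON.deriv r (mem_univ r)
  have hF'' : ∀ r : ℝ, HasDerivAt (deriv F) (deriv (deriv F) r) r :=
    fun r => (hFd r).differentiableAt.hasDerivAt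
  have hiter : ∀ r : ℝ, iteratedDeriv 2 F r = deriv (deriv F) r := by
    intro r
    rw [iteratedDeriv_succ, iteratedDeriv_one]
  -- the first integral Φ = F·((F')² − 1 − F²)
  set Φ : ℝ → ℝ := fun r => F r * ((deriv F r) ^ 2 - 1 - (F r) ^ 2) with hΦ
  have hΦderiv : ∀ r : ℝ, HasDerivAt Φ 0 r := by
    intro r
    have hsq : HasDerivAt (fun x => (deriv F x) ^ 2)
        ((2 : ℕ) * (deriv F r) ^ 1 * deriv (deriv F) r) r := (hF'' r).pow 2
    have hFsq : HasDerivAt (fun x => (F x) ^ 2)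
        ((2 : ℕ) * (F r) ^ 1 * deriv F r) r := (hF' r).pow 2
    have hin : HasDerivAt (fun x => (deriv F x) ^ 2 - 1 - (F x) ^ 2)
        ((2 : ℕ) * (deriv F r) ^ 1 * deriv (deriv F) r - (2 : ℕ) * (F r) ^ 1 * deriv F r) r :=
      (hsq.sub_const 1).sub hFsq
    have hmul := (hF' r).mul hin
    have hode := hODE r
    rw [hiter r] at hode
    refine hmul.congr_deriv ?_
    push_cast
    linear_combination (deriv F r) * hode
  have hΦ0 : ∀ r : ℝ, Φ r = 0 := by
    intro r
    have hconst : Φ r = Φ 0 :=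
      is_const_of_deriv_eq_zero (fun x => (hΦderiv x).differentiableAt)
        (fun x => (hΦderiv x).deriv) r 0
    rw [hconst]
    simp [hΦ, h0]
  -- F ≠ 0 on a punctured neighborhood of 0
  have hslope : Tendsto (slope F 0) (𝓝[≠] 0) (𝓝 1) := by
    have := hasDerivAt_iff_tendsto_slope.mp (hF' 0)
    rwa [h1] at this
  have hne : ∀ᶠ r in 𝓝[≠] (0 : ℝ), F r ≠ 0 := by
    filter_upwards [hslope.eventually_ne one_ne_zero, self_mem_nhdsWithin] with r hr hr0
    intro hFr
    apply hr
    simp [slope_def_field, hFr, h0]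
  -- hence (F')² = 1 + F² near 0
  have hsq : ∀ᶠ r in 𝓝 (0 : ℝ), (deriv F r) ^ 2 = 1 + (F r) ^ 2 := by
    have hne' : ∀ᶠ r in 𝓝 (0 : ℝ), r ∈ ({0}ᶜ : Set ℝ) → F r ≠ 0 :=
      eventually_nhdsWithin_iff.mp hne
    have h' : ∀ᶠ r in 𝓝 (0 : ℝ), r ∈ ({0}ᶜ : Set ℝ) → (deriv F r) ^ 2 = 1 + (F r) ^ 2 := by
      filter_upwards [hne'] with r hrne hrmem
      have hr : F r ≠ 0 := hrne hrmem
      have := hΦ0 r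
      have h' : (deriv F r) ^ 2 - 1 - (F r) ^ 2 = 0 := by
        rcases mul_eq_zero.mp this with h | h
        · exact absurd h hr
        · exact h
      linarith
    filter_upwards [h'] with r hr
    by_cases h : r = 0
    · subst h; simp [h1, h0]
    · exact hr (by simpa using h)
  obtain ⟨δ, hδpos, hδ⟩ := Metric.eventually_nhds_iff.mp hsq
  simp only [Real.dist_eq, sub_zero] at hδ
  -- deriv F > 0 on the ball
  have hderivF_cont : Continuous (deriv F) :=
    continuous_iff_continuousAt.mpr fun x => (hFd x).continuousAt
  have hpos : ∀ r : ℝ, |r| < δ → 0 < deriv F r := by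
    intro r hr
    by_contra hle
    push_neg at hle
    have hcont : ContinuousOn (deriv F) (uIcc 0 r) := hderivF_cont.continuousOn
    have hmem : (0 : ℝ) ∈ uIcc (deriv F 0) (deriv F r) := by
      rw [h1]
      exact ⟨by simpa using inf_le_right.trans hle, by simpa using le_trans zero_le_one le_sup_left⟩
    obtain ⟨c, hc, hc0⟩ := intermediate_value_uIcc hcont hmem
    have hcδ : |c| < δ := by
      rcases hc with ⟨hc1, hc2⟩
      have h1' : min 0 r ≥ -|r| := by
        rcases le_total 0 r with h | h <;> simp [min_def, abs_of_nonneg, abs_of_nonpos, h] <;> linarith [abs_nonneg r, neg_abs_le r]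
      have h2' : max 0 r ≤ |r| := by
        rcases le_total 0 r with h | h <;> simp [max_def, abs_of_nonneg, abs_of_nonpos, h] <;> linarith [abs_nonneg r, le_abs_self r]
      have := abs_le.mpr ⟨le_trans h1' hc1, le_trans hc2 h2'⟩
      exact lt_of_le_of_lt this hr
    have := hδ hcδ
    rw [hc0] at this
    nlinarith [sq_nonneg (F c)]
  -- F' = √(1 + F²) on the ball
  have hFode : ∀ r : ℝ, |r| < δ → HasDerivAt F (Real.sqrt (1 + (F r) ^ 2)) r := by
    intro r hr
    have : Real.sqrt (1 + (F r) ^ 2) = deriv F r := by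
      rw [← hδ hr, Real.sqrt_sq (hpos r hr).le]
    rw [this]
    exact hF' r
  -- sinh satisfies the same ODE
  have hsinh : ∀ r : ℝ, HasDerivAt Real.sinh (Real.sqrt (1 + (Real.sinh r) ^ 2)) r := by
    intro r
    have : Real.sqrt (1 + (Real.sinh r) ^ 2) = Real.cosh r := by
      rw [← Real.cosh_sq', Real.sqrt_sq (Real.cosh_pos r).le]
    rw [this]
    exact Real.hasDerivAt_sinh r
  -- uniqueness of ODE solutions
  have huniq : F =ᶠ[𝓝 (0 : ℝ)] Real.sinh := by
    have hball : ∀ᶠ r in 𝓝 (0 : ℝ), |r| < δ := by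
      have := Metric.ball_mem_nhds (0 : ℝ) hδpos
      filter_upwards [this] with r hr
      simpa [Real.dist_eq] using hr
    refine ODE_solution_unique_of_eventually (K := 1)
      (v := fun _ y => Real.sqrt (1 + y ^ 2)) (s := fun _ => univ)
      (Filter.Eventually.of_forall fun _ => sqrt_one_add_sq_lipschitz.lipschitzOnWith) ?_ ?_ (by simp [h0])
    · filter_upwards [hball] with r hr
      exact ⟨hFode r hr, mem_univ _⟩
    · filter_upwards with r
      exact ⟨hsinh r, mem_univ _⟩
  obtain ⟨ε, hεpos, hε⟩ := Metric.eventually_nhds_iff.mp huniq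
  exact ⟨ε, hεpos, fun r hr => hε (by simpa [Real.dist_eq] using hr)⟩
end

section
/- Let a : ℕ → ℝ satisfy a₁ = 1, a_{2m} = 0 for all m ≥ 1, a₃ = 1, and for every Q ≥ 2 the recursion ((2Q(n−1) + 2)/(2Q)!)·a_{2Q+1} + (n−1)·∑_{m=1}^{Q−1} a_{2m+1}/((2m+1)!·(2Q−1−2m)!) + ∑_{m=1}^{Q−1} a_{2m+1}/((2m)!·(2Q−2m)!) − n·(a_{2Q−1}/(2Q−1)! + ∑_{m=1}^{Q−1} a_{2m+1}/((2m+1)!·(2Q−2m−1)!)) = 0, where n ≥ 2 is a fixed integer. Then a_{2Q+1} = 1 for all Q ≥ 1. -/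
open Finset

lemma pair_sum (A : ℕ → ℝ) (b : ℕ) :
    ∑ k ∈ range (2*b), A k = ∑ m ∈ range b, (A (2*m) + A (2*m+1)) := by
  induction b with
  | zero => simp
  | succ b ih =>
    rw [show 2*(b+1) = 2*b+1+1 by ring, sum_range_succ, sum_range_succ, ih, sum_range_succ]
    ring

lemma fact_term (N k : ℕ) (hk : k ≤ N) :
    (1:ℝ)/((k.factorial : ℝ) * ((N-k).factorial : ℝ)) = (N.choose k : ℝ) / (N.factorial : ℝ) := by
  have h := Nat.choose_mul_factorial_mul_factorial hk
  have h1 : (0:ℝ) < k.factorial := by exact_mod_cast k.factorial_pos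
  have h2 : (0:ℝ) < (N-k).factorial := by exact_mod_cast (N-k).factorial_pos
  have h3 : (0:ℝ) < N.factorial := by exact_mod_cast N.factorial_pos
  field_simp
  have h' : N.factorial = k.factorial * (N-k).factorial * N.choose k := by rw [← h]; ring
  exact_mod_cast h'

lemma alt_sum_fact (N : ℕ) (hN : N ≠ 0) :
    ∑ k ∈ range (N+1), (-1:ℝ)^k / ((k.factorial : ℝ) * ((N-k).factorial : ℝ)) = 0 := by
  have h := Int.alternating_sum_range_choose_of_ne hN
  have h' : ∑ k ∈ range (N+1), (-1:ℝ)^k * (N.choose k : ℝ) = 0 := by exact_mod_cast h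
  have h3 : ((N.factorial : ℝ)) ≠ 0 := by positivity
  calc ∑ k ∈ range (N+1), (-1:ℝ)^k / ((k.factorial : ℝ) * ((N-k).factorial : ℝ))
      = ∑ k ∈ range (N+1), (-1:ℝ)^k * ((N.choose k : ℝ) / (N.factorial : ℝ)) := by
        refine Finset.sum_congr rfl (fun k hk => ?_)
        rw [← fact_term N k (by simpa [Nat.lt_succ_iff] using mem_range.mp hk)]
        ring
    _ = (∑ k ∈ range (N+1), (-1:ℝ)^k * (N.choose k : ℝ)) / (N.factorial : ℝ) := by
        rw [Finset.sum_div]; exact Finset.sum_congr rfl (fun k _ => by ring)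
    _ = 0 := by rw [h', zero_div]

lemma key_identity (Q : ℕ) (hQ : 2 ≤ Q) :
    ∑ m ∈ Icc 1 (Q-1), (1:ℝ)/(((2*m).factorial : ℝ) * ((2*Q-2*m).factorial : ℝ))
      - ∑ m ∈ Icc 1 (Q-1), (1:ℝ)/(((2*m+1).factorial : ℝ) * ((2*Q-1-2*m).factorial : ℝ))
      = (2*(Q:ℝ)-2)/((2*Q).factorial : ℝ) := by
  set A : ℕ → ℝ := fun k => (-1:ℝ)^k / ((k.factorial : ℝ) * ((2*Q-k).factorial : ℝ)) with hA
  have h0 : ∑ k ∈ range (2*Q+1), A k = 0 := alt_sum_fact (2*Q) (by omega)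
  rw [sum_range_succ, pair_sum] at h0
  have hsplit : range Q = insert 0 (Icc 1 (Q-1)) := by
    ext x; simp [Finset.mem_insert, Finset.mem_range, Finset.mem_Icc]; omega
  rw [hsplit, sum_insert (by simp)] at h0
  have hEeq : ∑ m ∈ Icc 1 (Q-1), (A (2*m) + A (2*m+1))
      = ∑ m ∈ Icc 1 (Q-1), ((1:ℝ)/(((2*m).factorial : ℝ) * ((2*Q-2*m).factorial : ℝ))
        - (1:ℝ)/(((2*m+1).factorial : ℝ) * ((2*Q-1-2*m).factorial : ℝ))) := by
    refine Finset.sum_congr rfl (fun m hm => ?_)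
    simp only [hA]
    rw [pow_mul, show (2*Q - (2*m+1)) = 2*Q - 1 - 2*m by omega]
    simp [pow_succ]
    ring
  rw [hEeq] at h0
  simp only [mul_zero] at h0
  rw [← Finset.sum_sub_distrib]
  have hA0 : A 0 + A (0+1) = 1/((2*Q).factorial : ℝ) - 1/((2*Q-1).factorial : ℝ) := by
    simp only [hA]
    norm_num
    ring
  have hA2Q : A (2*Q) = 1/((2*Q).factorial : ℝ) := by
    simp only [hA, pow_mul]
    norm_num
  have hfac : ((2*Q).factorial : ℝ) = (2*Q) * ((2*Q-1).factorial : ℝ) := by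
    have : (2*Q) = (2*Q-1) + 1 := by omega
    rw [this, Nat.factorial_succ]
    push_cast [show (2*Q-1)+1 = 2*Q by omega]
    ring
  have hFpos : (0:ℝ) < ((2*Q).factorial : ℝ) := by positivity
  have hGpos : (0:ℝ) < ((2*Q-1).factorial : ℝ) := by positivity
  have hQpos : (0:ℝ) < 2*(Q:ℝ) := by positivity
  have h1 : (1:ℝ)/((2*Q-1).factorial : ℝ) = (2*(Q:ℝ))/((2*Q).factorial : ℝ) := by
    rw [hfac]; push_cast; field_simp
  -- from h0 : (A 0 + A 1) + E + A (2Q) = 0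
  have : ∑ m ∈ Icc 1 (Q-1), ((1:ℝ)/(((2*m).factorial : ℝ) * ((2*Q-2*m).factorial : ℝ))
        - (1:ℝ)/(((2*m+1).factorial : ℝ) * ((2*Q-1-2*m).factorial : ℝ)))
      = -(A 0 + A 1) - A (2*Q) := by linarith
  rw [this, hA0, hA2Q, h1]
  ring

/-- Taylor-coefficient recursion for the reduced Einstein ODE: if `a₁ = 1`, all even
coefficients vanish, `a₃ = 1`, and the recursion obtained by equating coefficients of
`r^{2Q}` in `(n−1)FF'' + (F')² − 1 − nF² = 0` holds for all `Q ≥ 2`, then `a_{2Q+1} = 1`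
for all `Q ≥ 1`. -/
theorem taylor_coefficients_eq_one (n : ℕ) (hn : 2 ≤ n) (a : ℕ → ℝ)
    (h1 : a 1 = 1) (heven : ∀ m : ℕ, 1 ≤ m → a (2 * m) = 0) (h3 : a 3 = 1)
    (hrec : ∀ Q : ℕ, 2 ≤ Q →
      ((2 * (Q : ℝ) * ((n : ℝ) - 1) + 2) / (Nat.factorial (2 * Q) : ℝ)) * a (2 * Q + 1)
        + ((n : ℝ) - 1) * ∑ m ∈ Finset.Icc 1 (Q - 1),
            a (2 * m + 1)
              / ((Nat.factorial (2 * m + 1) : ℝ) * (Nat.factorial (2 * Q - 1 - 2 * m) : ℝ))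
        + ∑ m ∈ Finset.Icc 1 (Q - 1),
            a (2 * m + 1)
              / ((Nat.factorial (2 * m) : ℝ) * (Nat.factorial (2 * Q - 2 * m) : ℝ))
        - (n : ℝ) * (a (2 * Q - 1) / (Nat.factorial (2 * Q - 1) : ℝ)
            + ∑ m ∈ Finset.Icc 1 (Q - 1),
                a (2 * m + 1)
                  / ((Nat.factorial (2 * m + 1) : ℝ)
                      * (Nat.factorial (2 * Q - 2 * m - 1) : ℝ))) = 0) :
    ∀ Q : ℕ, 1 ≤ Q → a (2 * Q + 1) = 1 := by
  intro Q
  induction Q using Nat.strong_induction_on with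
  | _ Q ih =>
    intro hQ1
    rcases eq_or_lt_of_le hQ1 with h|h
    · rw [← h]; exact h3
    have hQ2 : 2 ≤ Q := h
    have heq := hrec Q hQ2
    -- evaluate sums using the induction hypothesis
    have hval : ∀ m ∈ Finset.Icc 1 (Q-1), a (2*m+1) = 1 := by
      intro m hm
      rw [Finset.mem_Icc] at hm
      exact ih m (by omega) hm.1
    have haprev : a (2*Q-1) = 1 := by
      have : 2*Q-1 = 2*(Q-1)+1 := by omega
      rw [this]; exact ih (Q-1) (by omega) (by omega)
    rw [haprev] at heq
    have e1 : ∑ m ∈ Finset.Icc 1 (Q-1),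
        a (2*m+1) / ((Nat.factorial (2*m+1) : ℝ) * (Nat.factorial (2*Q-1-2*m) : ℝ))
        = ∑ m ∈ Finset.Icc 1 (Q-1),
        (1:ℝ) / ((Nat.factorial (2*m+1) : ℝ) * (Nat.factorial (2*Q-1-2*m) : ℝ)) :=
      Finset.sum_congr rfl (fun m hm => by rw [hval m hm])
    have e2 : ∑ m ∈ Finset.Icc 1 (Q-1),
        a (2*m+1) / ((Nat.factorial (2*m) : ℝ) * (Nat.factorial (2*Q-2*m) : ℝ))
        = ∑ m ∈ Finset.Icc 1 (Q-1),
        (1:ℝ) / ((Nat.factorial (2*m) : ℝ) * (Nat.factorial (2*Q-2*m) : ℝ)) :=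
      Finset.sum_congr rfl (fun m hm => by rw [hval m hm])
    have e3 : ∑ m ∈ Finset.Icc 1 (Q-1),
        a (2*m+1) / ((Nat.factorial (2*m+1) : ℝ) * (Nat.factorial (2*Q-2*m-1) : ℝ))
        = ∑ m ∈ Finset.Icc 1 (Q-1),
        (1:ℝ) / ((Nat.factorial (2*m+1) : ℝ) * (Nat.factorial (2*Q-2*m-1) : ℝ)) :=
      Finset.sum_congr rfl (fun m hm => by rw [hval m hm])
    rw [e1, e2, e3] at heq
    -- unify the two odd-denominator sums
    have hsub : ∀ m : ℕ, 2*Q - 2*m - 1 = 2*Q - 1 - 2*m := fun m => by omega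
    simp only [hsub] at heq
    set S1 : ℝ := ∑ m ∈ Finset.Icc 1 (Q-1),
        (1:ℝ)/((Nat.factorial (2*m+1) : ℝ) * (Nat.factorial (2*Q-1-2*m) : ℝ)) with hS1
    set S2 : ℝ := ∑ m ∈ Finset.Icc 1 (Q-1),
        (1:ℝ)/((Nat.factorial (2*m) : ℝ) * (Nat.factorial (2*Q-2*m) : ℝ)) with hS2
    have hkey := key_identity Q hQ2
    rw [← hS1, ← hS2] at hkey
    have hfac : ((2*Q).factorial : ℝ) = 2*(Q:ℝ) * ((2*Q-1).factorial : ℝ) := by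
      have h2 : (2*Q) = (2*Q-1) + 1 := by omega
      rw [h2, Nat.factorial_succ]
      push_cast [show (2*Q-1)+1 = 2*Q by omega]
      ring
    have hFpos : (0:ℝ) < ((2*Q).factorial : ℝ) := by positivity
    have hGpos : (0:ℝ) < ((2*Q-1).factorial : ℝ) := by positivity
    have hT : (1:ℝ)/((2*Q-1).factorial : ℝ) = 2*(Q:ℝ)/((2*Q).factorial : ℝ) := by
      rw [hfac, div_eq_div_iff (by positivity) (by positivity)]; ring
    -- rewrite heq into the simplified form
    have heq' : ((2 * (Q : ℝ) * ((n : ℝ) - 1) + 2) / ((2*Q).factorial : ℝ)) * a (2*Q+1)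
        + (S2 - S1) - (n:ℝ) * (1/((2*Q-1).factorial : ℝ)) = 0 := by
      have hsum1 : ∑ m ∈ Finset.Icc 1 (Q-1),
          (1:ℝ)/((Nat.factorial (2*m+1) : ℝ) * (Nat.factorial (2*Q-1-2*m) : ℝ)) = S1 := rfl
      have := heq
      simp only [one_div] at this ⊢
      nlinarith [this]
    have hCpos : (0:ℝ) < (2 * (Q : ℝ) * ((n : ℝ) - 1) + 2) / ((2*Q).factorial : ℝ) := by
      have hQ0 : (0:ℝ) < (Q:ℝ) := by exact_mod_cast (show 0 < Q by omega)
      have hn1 : (1:ℝ) ≤ (n:ℝ) - 1 := by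
        have : (2:ℝ) ≤ (n:ℝ) := by exact_mod_cast hn
        linarith
      positivity
    have hfin : ((2 * (Q : ℝ) * ((n : ℝ) - 1) + 2) / ((2*Q).factorial : ℝ)) * a (2*Q+1)
        = ((2 * (Q : ℝ) * ((n : ℝ) - 1) + 2) / ((2*Q).factorial : ℝ)) * 1 := by
      rw [mul_one]
      have hrhs : ((2 * (Q : ℝ) * ((n : ℝ) - 1) + 2) / ((2*Q).factorial : ℝ))
          = (n:ℝ) * (1/((2*Q-1).factorial : ℝ)) - (S2 - S1) := by
        rw [hT, hkey]
        field_simp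
        ring
      linarith [heq']
    exact mul_left_cancel₀ (ne_of_gt hCpos) hfin
end
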